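/- Let ε₁ be a random variable on [0,∞) with continuous density δ, survival function Δ(d) = ∫_d^∞ δ, and let ε₂ have, conditionally on ε₁, density δ(ε₂)/Δ(ε₁) on [ε₁,∞). Then for any d ≥ 0 with Δ(d) > 0, P(ε₂ ≥ d) = Δ(d) - Δ(d)·ln(Δ(d)). -/

import Mathlib

open MeasureTheory

theorem quite_hedge_integral (δ Δ : ℝ → ℝ)
    (hδc : Continuous δ) (hδnn : ∀ x, 0 ≤ δ x) (hδ0 : ∀ x < 0, δ x = 0)
    (hnorm : ∫ x in Set.Ioi (0:ℝ), δ x = 1)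
    (hΔ : ∀ d, Δ d = ∫ x in Set.Ioi d, δ x)
    (d : ℝ) (hd : 0 ≤ d) (hΔd : 0 < Δ d) :
    ∫ ε₁ in Set.Ioi (0:ℝ),
        (δ ε₁ / Δ ε₁) * ∫ ε₂ in Set.Ioi (max ε₁ d), δ ε₂
      = Δ d - Δ d * Real.log (Δ d) := by
  have hδint : IntegrableOn δ (Set.Ioi (0:ℝ)) := by
    by_contra h
    rw [integral_undef h] at hnorm
    norm_num at hnorm
  have hδintx : ∀ x : ℝ, 0 ≤ x → IntegrableOn δ (Set.Ioi x) :=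
    fun x hx => hδint.mono_set (Set.Ioi_subset_Ioi hx)
  -- Δ x = 1 - ∫_0^x δ for all x
  have hΔeq : ∀ x : ℝ, Δ x = 1 - ∫ t in (0:ℝ)..x, δ t := by
    intro x
    rcases le_or_gt 0 x with hx | hx
    · have hsplit : (∫ t in Set.Ioi (0:ℝ), δ t)
          = (∫ t in Set.Ioc 0 x, δ t) + ∫ t in Set.Ioi x, δ t := by
        rw [← setIntegral_union (Set.Ioc_disjoint_Ioi le_rfl) measurableSet_Ioi
          (hδc.integrableOn_Icc.mono_set Set.Ioc_subset_Icc_self) (hδintx x hx),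
          Set.Ioc_union_Ioi_eq_Ioi hx]
      rw [hΔ, intervalIntegral.integral_of_le hx]
      rw [hnorm] at hsplit
      linarith
    · have hz : (∫ t in Set.Ioc x 0, δ t) = 0 := by
        rw [integral_Ioc_eq_integral_Ioo,
          setIntegral_congr_fun measurableSet_Ioo (g := fun _ => (0:ℝ))
            (fun y hy => hδ0 y hy.2)]
        simp
      have h1 : (∫ t in Set.Ioi x, δ t) = 1 := by
        rw [← Set.Ioc_union_Ioi_eq_Ioi hx.le,
          setIntegral_union (Set.Ioc_disjoint_Ioi le_rfl) measurableSet_Ioi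
            (hδc.integrableOn_Icc.mono_set Set.Ioc_subset_Icc_self) hδint,
          hz, hnorm, zero_add]
      have h2 : (∫ t in (0:ℝ)..x, δ t) = 0 := by
        rw [intervalIntegral.integral_of_ge hx.le, hz, neg_zero]
      rw [hΔ, h1, h2, sub_zero]
  have hΔ0 : Δ 0 = 1 := by rw [hΔ, hnorm]
  -- subtraction formula
  have hsub : ∀ x y : ℝ, Δ x - Δ y = ∫ t in x..y, δ t := by
    intro x y
    rw [hΔeq x, hΔeq y, ← intervalIntegral.integral_add_adjacent_intervals
      (hδc.intervalIntegrable 0 x) (hδc.intervalIntegrable x y)]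
    ring
  have hΔnn : ∀ x, 0 ≤ Δ x := by
    intro x
    rw [hΔ]
    exact setIntegral_nonneg measurableSet_Ioi fun y _ => hδnn y
  have hΔmono : ∀ x y : ℝ, x ≤ y → Δ y ≤ Δ x := by
    intro x y hxy
    have h : 0 ≤ ∫ t in x..y, δ t :=
      intervalIntegral.integral_nonneg hxy fun t _ => hδnn t
    rw [← hsub] at h; linarith
  -- Δ has derivative -δ x at every x
  have hΔder : ∀ x : ℝ, HasDerivAt Δ (-δ x) x := by
    intro x
    have h : HasDerivAt (fun u => ∫ t in (0:ℝ)..u, δ t) (δ x) x :=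
      intervalIntegral.integral_hasDerivAt_right (hδc.intervalIntegrable 0 x)
        (hδc.stronglyMeasurableAtFilter _ _) hδc.continuousAt
    have h2 : HasDerivAt (fun u => 1 - ∫ t in (0:ℝ)..u, δ t) (-δ x) x := h.const_sub 1
    exact h2.congr_of_eventuallyEq (Filter.Eventually.of_forall fun y => hΔeq y)
  have hΔcont : Continuous Δ :=
    continuous_iff_continuousAt.mpr fun x => (hΔder x).continuousAt
  -- positivity on [0, d]
  have hΔpos : ∀ x ∈ Set.Icc (0:ℝ) d, 0 < Δ x :=
    fun x hx => lt_of_lt_of_le hΔd (hΔmono x d hx.2)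
  -- FTC: ∫_0^d δ/Δ = -log (Δ d)
  have hlog : (∫ t in (0:ℝ)..d, δ t / Δ t) = -Real.log (Δ d) := by
    have hIcc : Set.uIcc (0:ℝ) d = Set.Icc 0 d := Set.uIcc_of_le hd
    have hderiv : ∀ x ∈ Set.uIcc (0:ℝ) d,
        HasDerivAt (fun u => -Real.log (Δ u)) (δ x / Δ x) x := by
      intro x hx
      rw [hIcc] at hx
      have hne : Δ x ≠ 0 := (hΔpos x hx).ne'
      have := ((hΔder x).log hne).neg
      have h' : HasDerivAt (fun u => -Real.log (Δ u)) (-(-δ x / Δ x)) x := this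
      rw [neg_div, neg_neg] at h'
      exact h'
    have hint : IntervalIntegrable (fun t => δ t / Δ t) volume 0 d := by
      apply ContinuousOn.intervalIntegrable
      rw [hIcc]
      exact hδc.continuousOn.div hΔcont.continuousOn fun x hx => (hΔpos x hx).ne'
    rw [intervalIntegral.integral_eq_sub_of_hasDerivAt hderiv hint, hΔ0]
    simp
  -- If Δ x = 0 for x > 0, then δ x = 0
  have hzero : ∀ x : ℝ, 0 < x → Δ x = 0 → δ x = 0 := by
    intro x hx h0
    by_contra hne
    have hpos : 0 < δ x := lt_of_le_of_ne (hδnn x) (Ne.symm hne)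
    have hev : ∀ᶠ y in nhds x, δ x / 2 < δ y :=
      hδc.continuousAt.eventually_const_lt (by linarith)
    rcases Metric.eventually_nhds_iff.mp hev with ⟨η, hη, hball⟩
    have hlt : x < x + η / 2 := by linarith
    have hintpos : 0 < ∫ t in x..(x + η / 2), δ t := by
      apply intervalIntegral.intervalIntegral_pos_of_pos_on
        (hδc.intervalIntegrable _ _) _ hlt
      intro t ht
      refine lt_trans (by linarith) (hball ?_)
      rw [Real.dist_eq, abs_lt]
      constructor <;> [linarith [ht.1]; linarith [ht.2]]
    have := hsub x (x + η / 2)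
    have := hΔnn (x + η / 2)
    linarith
  -- Rewrite integrand
  have hEq : ∀ x ∈ Set.Ioi (0:ℝ),
      (δ x / Δ x) * ∫ ε₂ in Set.Ioi (max x d), δ ε₂ = (δ x / Δ x) * Δ (max x d) := by
    intro x _
    rw [hΔ (max x d)]
  rw [setIntegral_congr_fun measurableSet_Ioi hEq]
  -- split the domain
  rw [← Set.Ioc_union_Ioi_eq_Ioi hd,
    setIntegral_union (Set.Ioc_disjoint_Ioi le_rfl) measurableSet_Ioi]
  · have hA : (∫ x in Set.Ioc (0:ℝ) d, (δ x / Δ x) * Δ (max x d))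
        = -(Δ d * Real.log (Δ d)) := by
      rw [setIntegral_congr_fun measurableSet_Ioc
        (g := fun x => Δ d * (δ x / Δ x)) (fun x hx => by
          rw [max_eq_right hx.2]; ring)]
      rw [integral_const_mul, ← intervalIntegral.integral_of_le hd, hlog]
      ring
    have hB : (∫ x in Set.Ioi d, (δ x / Δ x) * Δ (max x d)) = Δ d := by
      rw [setIntegral_congr_fun measurableSet_Ioi (g := δ) (fun x hx => by
        rw [max_eq_left (le_of_lt hx)]
        rcases eq_or_ne (Δ x) 0 with h0 | h0
        · rw [h0, hzero x (lt_of_le_of_lt hd hx) h0]; ring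
        · field_simp)]
      rw [← hΔ]
    rw [hA, hB]; ring
  · -- integrable on Ioc 0 d
    have h1 : ContinuousOn (fun x => δ x / Δ x) (Set.Icc 0 d) :=
      hδc.continuousOn.div hΔcont.continuousOn fun x hx => (hΔpos x hx).ne'
    have h2 : ContinuousOn (fun x => (δ x / Δ x) * Δ (max x d)) (Set.Icc 0 d) :=
      h1.mul ((hΔcont.comp (continuous_id.max continuous_const)).continuousOn)
    exact h2.integrableOn_Icc.mono_set Set.Ioc_subset_Icc_self
  · -- integrable on Ioi d
    apply Integrable.congr ((hδintx d hd))
    filter_upwards [ae_restrict_mem measurableSet_Ioi] with x hx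
    rw [max_eq_left (le_of_lt hx)]
    rcases eq_or_ne (Δ x) 0 with h0 | h0
    · rw [h0, hzero x (lt_of_le_of_lt hd hx) h0]; ring
    · field_simp
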